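/- If N is a pure submodule of a left R-module M and both N and M/N are 𝒦-Mittag-Leffler, then M is 𝒦-Mittag-Leffler; moreover any pure submodule of a 𝒦-Mittag-Leffler module is 𝒦-Mittag-Leffler. -/

import Mathlib

open MulOpposite

section CTensor
variable (R : Type) [Ring R]
variable (N : Type) [AddCommGroup N] [Module Rᵐᵒᵖ N]
variable (M : Type) [AddCommGroup M] [Module R M]

def tensorRels : AddSubgroup (FreeAbelianGroup (N × M)) :=
  AddSubgroup.closure
    {x | (∃ n n' m, x = FreeAbelianGroup.of (n + n', m) - FreeAbelianGroup.of (n, m) -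
            FreeAbelianGroup.of (n', m)) ∨
         (∃ n m m', x = FreeAbelianGroup.of (n, m + m') - FreeAbelianGroup.of (n, m) -
            FreeAbelianGroup.of (n, m')) ∨
         (∃ (r : R) (n : N) (m : M), x = FreeAbelianGroup.of (op r • n, m) -
            FreeAbelianGroup.of (n, r • m))}

abbrev CTensor : Type := FreeAbelianGroup (N × M) ⧸ tensorRels R N M

def ctmul (n : N) (m : M) : CTensor R N M :=
  QuotientAddGroup.mk (FreeAbelianGroup.of (n, m))

variable {R N M}

theorem ctmul_add_left (n n' : N) (m : M) :
    ctmul R N M (n + n') m = ctmul R N M n m + ctmul R N M n' m := by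
  rw [eq_comm, ← sub_eq_zero]
  show QuotientAddGroup.mk _ + QuotientAddGroup.mk _ - QuotientAddGroup.mk _ = (0 : CTensor R N M)
  rw [← QuotientAddGroup.mk_add, ← QuotientAddGroup.mk_sub, QuotientAddGroup.eq_zero_iff]
  have h : FreeAbelianGroup.of (n, m) + FreeAbelianGroup.of (n', m) -
      FreeAbelianGroup.of (n + n', m) =
      -(FreeAbelianGroup.of (n + n', m) - FreeAbelianGroup.of (n, m) -
        FreeAbelianGroup.of (n', m)) := by abel
  rw [h]
  exact neg_mem (AddSubgroup.subset_closure (Or.inl ⟨n, n', m, rfl⟩))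

theorem ctmul_add_right (n : N) (m m' : M) :
    ctmul R N M n (m + m') = ctmul R N M n m + ctmul R N M n m' := by
  rw [eq_comm, ← sub_eq_zero]
  show QuotientAddGroup.mk _ + QuotientAddGroup.mk _ - QuotientAddGroup.mk _ = (0 : CTensor R N M)
  rw [← QuotientAddGroup.mk_add, ← QuotientAddGroup.mk_sub, QuotientAddGroup.eq_zero_iff]
  have h : FreeAbelianGroup.of (n, m) + FreeAbelianGroup.of (n, m') -
      FreeAbelianGroup.of (n, m + m') =
      -(FreeAbelianGroup.of (n, m + m') - FreeAbelianGroup.of (n, m) -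
        FreeAbelianGroup.of (n, m')) := by abel
  rw [h]
  exact neg_mem (AddSubgroup.subset_closure (Or.inr (Or.inl ⟨n, m, m', rfl⟩)))

theorem ctmul_smul (r : R) (n : N) (m : M) :
    ctmul R N M (op r • n) m = ctmul R N M n (r • m) := by
  rw [← sub_eq_zero]
  show QuotientAddGroup.mk _ - QuotientAddGroup.mk _ = (0 : CTensor R N M)
  rw [← QuotientAddGroup.mk_sub, QuotientAddGroup.eq_zero_iff]
  apply AddSubgroup.subset_closure
  right; right
  exact ⟨r, n, m, rfl⟩

variable (R N M)

/-- Universal property: lift a balanced biadditive map to the balanced tensor product. -/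
def ctlift {A : Type} [AddCommGroup A] (f : N → M → A)
    (h1 : ∀ n n' m, f (n + n') m = f n m + f n' m)
    (h2 : ∀ n m m', f n (m + m') = f n m + f n m')
    (h3 : ∀ (r : R) n m, f (op r • n) m = f n (r • m)) :
    CTensor R N M →+ A :=
  QuotientAddGroup.lift _ (FreeAbelianGroup.lift fun p => f p.1 p.2) (by
    rw [tensorRels, AddSubgroup.closure_le]
    rintro x (⟨n, n', m, rfl⟩ | ⟨n, m, m', rfl⟩ | ⟨r, n, m, rfl⟩) <;>
      simp [AddMonoidHom.mem_ker, FreeAbelianGroup.lift_apply_of, h1, h2, h3])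

@[simp] theorem ctlift_ctmul {A : Type} [AddCommGroup A] (f : N → M → A) (h1) (h2) (h3)
    (n : N) (m : M) : ctlift R N M f h1 h2 h3 (ctmul R N M n m) = f n m := by
  simp [ctlift, ctmul, QuotientAddGroup.lift_mk, FreeAbelianGroup.lift_apply_of]

end CTensor

section Maps
variable (R : Type) [Ring R]

/-- Functoriality of the balanced tensor product in the right-module variable. -/
def ctmapLeft {N N' : Type} [AddCommGroup N] [Module Rᵐᵒᵖ N] [AddCommGroup N']
    [Module Rᵐᵒᵖ N'] (f : N →ₗ[Rᵐᵒᵖ] N') (M : Type) [AddCommGroup M] [Module R M] :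
    CTensor R N M →+ CTensor R N' M :=
  ctlift R N M (fun n m => ctmul R N' M (f n) m)
    (fun n n' m => by rw [map_add, ctmul_add_left])
    (fun n m m' => by rw [ctmul_add_right])
    (fun r n m => by rw [map_smul, ctmul_smul])

/-- Functoriality of the balanced tensor product in the left-module variable. -/
def ctmapRight (N : Type) [AddCommGroup N] [Module Rᵐᵒᵖ N] {M M' : Type} [AddCommGroup M]
    [Module R M] [AddCommGroup M'] [Module R M'] (f : M →ₗ[R] M') :
    CTensor R N M →+ CTensor R N M' :=
  ctlift R N M (fun n m => ctmul R N M' n (f m))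
    (fun n n' m => by rw [ctmul_add_left])
    (fun n m m' => by rw [map_add, ctmul_add_right])
    (fun r n m => by rw [ctmul_smul, map_smul])

/-- The canonical map `(∏ i, N i) ⊗ M → ∏ i, (N i ⊗ M)`. -/
def ctCanonical {ι : Type} (N : ι → Type) [∀ i, AddCommGroup (N i)]
    [∀ i, Module Rᵐᵒᵖ (N i)] (M : Type) [AddCommGroup M] [Module R M] :
    CTensor R (∀ i, N i) M →+ ∀ i, CTensor R (N i) M :=
  ctlift R (∀ i, N i) M (fun n m i => ctmul R (N i) M (n i) m)
    (fun n n' m => by funext i; exact ctmul_add_left _ _ _)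
    (fun n m m' => by funext i; exact ctmul_add_right _ _ _)
    (fun r n m => by funext i; exact ctmul_smul _ _ _)

end Maps

/-- A left `R`-module `M` is Mittag-Leffler relative to a class `K` of right `R`-modules if
for every family `(Nᵢ)` of modules from `K` the canonical map
`(∏ i, Nᵢ) ⊗_R M → ∏ i, (Nᵢ ⊗_R M)` is injective. -/
def IsRelMittagLeffler (R : Type) [Ring R] (K : Set (ModuleCat Rᵐᵒᵖ)) (M : Type)
    [AddCommGroup M] [Module R M] : Prop :=
  ∀ (ι : Type) (N : ι → ModuleCat Rᵐᵒᵖ), (∀ i, N i ∈ K) →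
    Function.Injective (ctCanonical R (fun i => ↥(N i)) M)

/-- A submodule `P` of the left `R`-module `M` is pure if for every right `R`-module `X` the
induced map `X ⊗_R P → X ⊗_R M` is injective. -/
def IsPureSubmodule (R : Type) [Ring R] {M : Type} [AddCommGroup M] [Module R M]
    (P : Submodule R M) : Prop :=
  ∀ X : ModuleCat Rᵐᵒᵖ, Function.Injective (ctmapRight R ↥X P.subtype)


section Aux

variable {R : Type} [Ring R]

theorem ctensor_hom_ext {N : Type} [AddCommGroup N] [Module Rᵐᵒᵖ N]
    {M : Type} [AddCommGroup M] [Module R M] {A : Type} [AddCommGroup A]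
    {f g : CTensor R N M →+ A}
    (h : ∀ n m, f (ctmul R N M n m) = g (ctmul R N M n m)) : f = g := by
  refine QuotientAddGroup.addMonoidHom_ext _ ?_
  exact FreeAbelianGroup.lift_ext _ _ fun p => h p.1 p.2

theorem ctensor_induction {N : Type} [AddCommGroup N] [Module Rᵐᵒᵖ N]
    {M : Type} [AddCommGroup M] [Module R M] {P : CTensor R N M → Prop}
    (x : CTensor R N M) (h0 : P 0) (hmul : ∀ n m, P (ctmul R N M n m))
    (hneg : ∀ a, P a → P (-a)) (hadd : ∀ a b, P a → P b → P (a + b)) : P x := by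
  obtain ⟨z, rfl⟩ := QuotientAddGroup.mk_surjective x
  induction z using FreeAbelianGroup.induction_on with
  | zero => exact h0
  | of p => exact hmul p.1 p.2
  | neg a ha => exact hneg _ ha
  | add a b ha hb => exact hadd _ _ ha hb

@[simp] theorem ctmapRight_ctmul {N : Type} [AddCommGroup N] [Module Rᵐᵒᵖ N]
    {M M' : Type} [AddCommGroup M] [Module R M] [AddCommGroup M'] [Module R M']
    (f : M →ₗ[R] M') (n : N) (m : M) :
    ctmapRight R N f (ctmul R N M n m) = ctmul R N M' n (f m) :=
  ctlift_ctmul _ _ _ _ _ _ _ _ _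

@[simp] theorem ctCanonical_ctmul {ι : Type} {N : ι → Type} [∀ i, AddCommGroup (N i)]
    [∀ i, Module Rᵐᵒᵖ (N i)] {M : Type} [AddCommGroup M] [Module R M]
    (n : ∀ i, N i) (m : M) :
    ctCanonical R N M (ctmul R (∀ i, N i) M n m) = fun i => ctmul R (N i) M (n i) m :=
  ctlift_ctmul _ _ _ _ _ _ _ _ _

theorem ctmul_sub_right {N : Type} [AddCommGroup N] [Module Rᵐᵒᵖ N]
    {M : Type} [AddCommGroup M] [Module R M] (n : N) (m m' : M) :
    ctmul R N M n (m - m') = ctmul R N M n m - ctmul R N M n m' := by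
  rw [eq_sub_iff_add_eq, ← ctmul_add_right, sub_add_cancel]

/-- Naturality of the canonical map in the second variable. -/
theorem ctCanonical_naturality {ι : Type} {N : ι → Type} [∀ i, AddCommGroup (N i)]
    [∀ i, Module Rᵐᵒᵖ (N i)] {M M' : Type} [AddCommGroup M] [Module R M]
    [AddCommGroup M'] [Module R M'] (f : M →ₗ[R] M') (x : CTensor R (∀ i, N i) M) (i : ι) :
    ctCanonical R N M' (ctmapRight R (∀ i, N i) f x) i
      = ctmapRight R (N i) f (ctCanonical R N M x i) := by
  induction x using ctensor_induction with
  | h0 => simp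
  | hmul n m => simp
  | hneg a ha => simp only [map_neg, Pi.neg_apply, ha]
  | hadd a b ha hb => simp only [map_add, Pi.add_apply, ha, hb]

/-- Exactness of `X ⊗ N → X ⊗ M → X ⊗ M/N` at the middle. -/
theorem ct_exact {X : Type} [AddCommGroup X] [Module Rᵐᵒᵖ X]
    {M : Type} [AddCommGroup M] [Module R M] (N : Submodule R M)
    (x : CTensor R X M) (hx : ctmapRight R X N.mkQ x = 0) :
    ∃ y : CTensor R X ↥N, ctmapRight R X N.subtype y = x := by
  set I : AddSubgroup (CTensor R X M) := (ctmapRight R X N.subtype).range with hI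
  have key : ∀ (n : X) (m m' : M), m - m' ∈ N →
      (QuotientAddGroup.mk (ctmul R X M n m) : CTensor R X M ⧸ I)
        = QuotientAddGroup.mk (ctmul R X M n m') := by
    intro n m m' h
    rw [QuotientAddGroup.eq]
    refine ⟨ctmul R X ↥N n ⟨m' - m, by simpa using N.neg_mem h⟩, ?_⟩
    rw [ctmapRight_ctmul]
    show ctmul R X M n (m' - m) = _
    rw [ctmul_sub_right]
    abel
  let f : X → (M ⧸ N) → (CTensor R X M ⧸ I) := fun n q =>
    Quotient.liftOn q (fun m => (QuotientAddGroup.mk (ctmul R X M n m) : CTensor R X M ⧸ I))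
      (fun a b hab => key n a b ((Submodule.quotientRel_def N).mp hab))
  have hf : ∀ (n : X) (m : M), f n (N.mkQ m)
      = QuotientAddGroup.mk (ctmul R X M n m) := fun n m => rfl
  have h1 : ∀ n n' q, f (n + n') q = f n q + f n' q := by
    intro n n' q
    obtain ⟨m, rfl⟩ := Submodule.mkQ_surjective N q
    rw [hf, hf, hf, ctmul_add_left, QuotientAddGroup.mk_add]
  have h2 : ∀ n q q', f n (q + q') = f n q + f n q' := by
    intro n q q'
    obtain ⟨m, rfl⟩ := Submodule.mkQ_surjective N q
    obtain ⟨m', rfl⟩ := Submodule.mkQ_surjective N q'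
    rw [← map_add, hf, hf, hf, ctmul_add_right, QuotientAddGroup.mk_add]
  have h3 : ∀ (r : R) n q, f (op r • n) q = f n (r • q) := by
    intro r n q
    obtain ⟨m, rfl⟩ := Submodule.mkQ_surjective N q
    rw [← map_smul, hf, hf, ctmul_smul]
  let φ : CTensor R X (M ⧸ N) →+ (CTensor R X M ⧸ I) := ctlift R X (M ⧸ N) f h1 h2 h3
  have hcomp : φ.comp (ctmapRight R X N.mkQ) = QuotientAddGroup.mk' I := by
    refine ctensor_hom_ext fun n m => ?_
    simp only [AddMonoidHom.coe_comp, Function.comp_apply, ctmapRight_ctmul]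
    rw [show φ (ctmul R X (M ⧸ N) n (N.mkQ m))
        = f n (N.mkQ m) from ctlift_ctmul _ _ _ _ _ _ _ _ _, hf]
    rfl
  have : (QuotientAddGroup.mk' I) x = 0 := by
    rw [← hcomp]
    simp [hx]
  rwa [QuotientAddGroup.mk'_apply, QuotientAddGroup.eq_zero_iff] at this

end Aux

/-- The class of `K`-Mittag-Leffler modules is closed under pure extensions and pure
submodules: if `N ⊆ M` is pure and both `N` and `M/N` are `K`-Mittag-Leffler then so is `M`;
moreover any pure submodule of a `K`-Mittag-Leffler module is `K`-Mittag-Leffler. -/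
theorem relMittagLeffler_of_pure_extension_and_pure_submodule (R : Type) [Ring R]
    (K : Set (ModuleCat Rᵐᵒᵖ)) :
    (∀ (M : Type) (_ : AddCommGroup M) (_ : Module R M) (N : Submodule R M),
      IsPureSubmodule R N → IsRelMittagLeffler R K ↥N → IsRelMittagLeffler R K (M ⧸ N) →
        IsRelMittagLeffler R K M) ∧
    (∀ (M : Type) (_ : AddCommGroup M) (_ : Module R M) (N : Submodule R M),
      IsPureSubmodule R N → IsRelMittagLeffler R K M → IsRelMittagLeffler R K ↥N) := by
  constructor
  · -- pure extension
    intro M _ _ N hpure hN hQ ι Ns hNs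
    intro x y hxy
    rw [← sub_eq_zero]
    set z := x - y with hz
    have hzc : ctCanonical R (fun i => ↥(Ns i)) M z = 0 := by
      rw [hz, map_sub, hxy, sub_self]
    have hz0 : ctmapRight R (∀ i, ↥(Ns i)) N.mkQ z = 0 := by
      apply hQ ι Ns hNs
      rw [map_zero]
      funext i
      rw [ctCanonical_naturality, hzc]
      simp
    obtain ⟨w, hw⟩ := ct_exact N z hz0
    have hwc : ctCanonical R (fun i => ↥(Ns i)) ↥N w = 0 := by
      funext i
      apply hpure (Ns i)
      have h := ctCanonical_naturality (N := fun i => ↥(Ns i)) N.subtype w i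
      rw [hw, hzc] at h
      exact h.symm.trans (by simp)
    have : w = 0 := by
      apply hN ι Ns hNs
      rw [map_zero, hwc]
    rw [← hw, this, map_zero]
  · -- pure submodule
    intro M _ _ N hpure hM ι Ns hNs
    intro x y hxy
    apply hpure (ModuleCat.of Rᵐᵒᵖ (∀ i, ↥(Ns i)))
    apply hM ι Ns hNs
    funext i
    have h : ctmapRight R ↥(Ns i) N.subtype (ctCanonical R (fun i => ↥(Ns i)) ↥N x i)
        = ctmapRight R ↥(Ns i) N.subtype (ctCanonical R (fun i => ↥(Ns i)) ↥N y i) := by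
      rw [hxy]
    exact (ctCanonical_naturality N.subtype x i).trans
      (h.trans (ctCanonical_naturality N.subtype y i).symm)
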